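/- arXiv:2506.10838 — 2 statements merged into one kernel-verified Lean document; each statement's English description precedes it below -/
import Mathlib

section
/- Let f and g be coprime integer polynomials of positive degree. If gcd(L(f), L(g)) = 1, then B(f,g) = r(f,g). -/
open Polynomial

/-- `B` is a positive common denominator for the (unique) Bezout cofactors `p, q` in `ℚ[x]`
with `deg p < deg g`, `deg q < deg f` and `p*f + q*g = 1`, i.e. `B*p, B*q` lie in `ℤ[x]`. -/
def IsBezoutDenom (f g : Polynomial ℤ) (B : ℤ) : Prop :=
  0 < B ∧ ∃ p q : Polynomial ℚ,
    p.degree < (g.map (Int.castRingHom ℚ)).degree ∧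
    q.degree < (f.map (Int.castRingHom ℚ)).degree ∧
    p * f.map (Int.castRingHom ℚ) + q * g.map (Int.castRingHom ℚ) = 1 ∧
    (∃ P : Polynomial ℤ, P.map (Int.castRingHom ℚ) = Polynomial.C (B : ℚ) * p) ∧
    (∃ Q : Polynomial ℤ, Q.map (Int.castRingHom ℚ) = Polynomial.C (B : ℚ) * q)

lemma pseudoDiv_aux (g : Polynomial ℤ) (hg : 0 < g.degree) :
    ∀ n (u : Polynomial ℤ), u.natDegree ≤ n →
      ∃ (k : ℕ) (a u' : Polynomial ℤ),
        C g.leadingCoeff ^ k * u = a * g + u' ∧ u'.degree < g.degree := by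
  have hg0 : g ≠ 0 := fun h => by simp [h] at hg
  intro n
  induction n with
  | zero =>
    intro u hu
    refine ⟨0, 0, u, by simp, lt_of_le_of_lt ?_ hg⟩
    exact le_trans degree_le_natDegree (by exact_mod_cast Nat.cast_le.mpr hu)
  | succ n ih =>
    intro u hu
    by_cases hlt : u.degree < g.degree
    · exact ⟨0, 0, u, by simp, hlt⟩
    · push_neg at hlt
      have hu0 : u ≠ 0 := by
        intro h
        rw [h, degree_zero] at hlt
        exact absurd (lt_of_lt_of_le hg hlt) (by simp)
      have hdle : g.natDegree ≤ u.natDegree := natDegree_le_natDegree hlt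
      set z : Polynomial ℤ := C u.leadingCoeff * X ^ (u.natDegree - g.natDegree) with hz
      set u1 : Polynomial ℤ := C g.leadingCoeff * u - z * g with hu1
      have hLg : g.leadingCoeff ≠ 0 := leadingCoeff_ne_zero.mpr hg0
      have hLu : u.leadingCoeff ≠ 0 := leadingCoeff_ne_zero.mpr hu0
      have hdz : (z * g).degree = u.degree := by
        rw [degree_mul, hz, degree_C_mul_X_pow _ hLu, degree_eq_natDegree hg0,
          degree_eq_natDegree hu0]
        rw [← Nat.cast_add, Nat.sub_add_cancel hdle]
      have hd1 : (C g.leadingCoeff * u).degree = u.degree := by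
        rw [degree_mul, degree_C hLg, zero_add]
      have hdeg1 : u1.degree < u.degree := by
        rw [hu1]
        refine lt_of_lt_of_le (degree_sub_lt (hd1.trans hdz.symm) ?_ ?_) (le_of_eq hd1)
        · intro h
          rw [mul_eq_zero] at h
          rcases h with h | h
          · exact hLg (by simpa using h)
          · exact hu0 h
        · rw [hz]
          rw [leadingCoeff_mul, leadingCoeff_mul, leadingCoeff_C, leadingCoeff_mul,
            leadingCoeff_C, leadingCoeff_X_pow, mul_one, mul_comm]
      have hn1 : u1.natDegree ≤ n := by
        by_cases h0 : u1 = 0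
        · simp [h0]
        · have := natDegree_lt_natDegree h0 hdeg1
          omega
      obtain ⟨k, a, u', h1, h2⟩ := ih u1 hn1
      refine ⟨k + 1, C g.leadingCoeff ^ k * z + a, u', ?_, h2⟩
      have hrec : C g.leadingCoeff * u = u1 + z * g := by rw [hu1]; ring
      calc C g.leadingCoeff ^ (k+1) * u = C g.leadingCoeff ^ k * (C g.leadingCoeff * u) := by
            ring
        _ = C g.leadingCoeff ^ k * u1 + C g.leadingCoeff ^ k * (z * g) := by rw [hrec]; ring
        _ = (a * g + u') + C g.leadingCoeff ^ k * (z * g) := by rw [h1]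
        _ = (C g.leadingCoeff ^ k * z + a) * g + u' := by ring

lemma pseudoDiv (g : Polynomial ℤ) (hg : 0 < g.degree) (u : Polynomial ℤ) :
    ∃ (k : ℕ) (a u' : Polynomial ℤ),
      C g.leadingCoeff ^ k * u = a * g + u' ∧ u'.degree < g.degree :=
  pseudoDiv_aux g hg u.natDegree u le_rfl

lemma cof_deg {F G p q : Polynomial ℚ} (hF : 0 < F.degree) (hG : 0 < G.degree)
    (h : p * F + q * G = 1) (hp : p.degree < G.degree) : q.degree < F.degree := by
  have hGbot : G.degree ≠ ⊥ := fun hb => by rw [hb] at hG; exact absurd hG (by simp)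
  have hFbot : F.degree ≠ ⊥ := fun hb => by rw [hb] at hF; exact absurd hF (by simp)
  have key : q.degree + G.degree < F.degree + G.degree := by
    have hqG : q * G = 1 - p * F := by linear_combination h
    have h1 : q.degree + G.degree ≤ max (0 : WithBot ℕ) (p.degree + F.degree) := by
      rw [← degree_mul, hqG]
      refine le_trans (degree_sub_le 1 (p * F)) ?_
      rw [degree_one, degree_mul]
    refine lt_of_le_of_lt h1 (max_lt ?_ ?_)
    · exact lt_of_lt_of_le hF (le_add_of_nonneg_right hG.le)
    · rw [add_comm F.degree G.degree]
      exact WithBot.add_lt_add_right hFbot hp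
  rw [add_comm q.degree G.degree, add_comm F.degree G.degree] at key
  exact (WithBot.add_lt_add_iff_left hGbot).mp key

lemma bezout_uniq {F G p q p₂ q₂ : Polynomial ℚ} (hcop : IsCoprime F G) (hG0 : G ≠ 0)
    (hp : p.degree < G.degree) (hp₂ : p₂.degree < G.degree)
    (h1 : p * F + q * G = 1) (h2 : p₂ * F + q₂ * G = 1) : p = p₂ ∧ q = q₂ := by
  have hdvd : G ∣ (p - p₂) * F := ⟨q₂ - q, by linear_combination h1 - h2⟩
  have hdvd2 : G ∣ (p - p₂) := hcop.symm.dvd_of_dvd_mul_right hdvd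
  have hz : p - p₂ = 0 := by
    refine eq_zero_of_dvd_of_degree_lt hdvd2 ?_
    exact lt_of_le_of_lt (degree_sub_le p p₂) (max_lt hp hp₂)
  have hpp : p = p₂ := sub_eq_zero.mp hz
  refine ⟨hpp, ?_⟩
  have : q * G = q₂ * G := by rw [hpp] at h1; linear_combination h1 - h2
  exact mul_right_cancel₀ hG0 this

lemma degC_mul_le {c : ℚ} (M : Polynomial ℚ) : (C c * M).degree ≤ M.degree := by
  refine le_trans (degree_mul_le _ _) (le_trans (add_le_add degree_C_le le_rfl) ?_)
  simp

theorem statement_8 (f g : Polynomial ℤ)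
    (hf : 0 < f.natDegree) (hg : 0 < g.natDegree)
    (hcop : IsCoprime (f.map (Int.castRingHom ℚ)) (g.map (Int.castRingHom ℚ)))
    (r : ℤ) (hrpos : 0 < r)
    (hrmem : ∃ u v : Polynomial ℤ, u * f + v * g = Polynomial.C r)
    (hrmin : ∀ s : ℤ, 0 < s →
      (∃ u v : Polynomial ℤ, u * f + v * g = Polynomial.C s) → r ≤ s)
    (B : ℤ) (hB : IsBezoutDenom f g B)
    (hBmin : ∀ B' : ℤ, IsBezoutDenom f g B' → B ≤ B')
    (hd : Int.gcd f.leadingCoeff g.leadingCoeff = 1) :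
    B = r := by
  set φ := Int.castRingHom ℚ with hφ
  have hφinj : Function.Injective φ := Int.cast_injective
  have hinj : Function.Injective (Polynomial.map φ) := Polynomial.map_injective _ hφinj
  set F := f.map φ with hFdef
  set G := g.map φ with hGdef
  have hfd : 0 < f.degree := natDegree_pos_iff_degree_pos.mp hf
  have hgd : 0 < g.degree := natDegree_pos_iff_degree_pos.mp hg
  have hf0 : f ≠ 0 := fun h => by simp [h] at hfd
  have hg0 : g ≠ 0 := fun h => by simp [h] at hgd
  have hdF : F.degree = f.degree := degree_map_eq_of_injective hφinj f
  have hdG : G.degree = g.degree := degree_map_eq_of_injective hφinj g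
  have hFd : 0 < F.degree := hdF ▸ hfd
  have hGd : 0 < G.degree := hdG ▸ hgd
  have hG0 : G ≠ 0 := fun h => by rw [h, degree_zero] at hGd; exact absurd hGd (by simp)
  -- Step 1: r ≤ B
  have hrB : r ≤ B := by
    obtain ⟨hBpos, p, q, _, _, heq, ⟨P, hP⟩, ⟨Q, hQ⟩⟩ := hB
    refine hrmin B hBpos ⟨P, Q, hinj ?_⟩
    rw [Polynomial.map_add, Polynomial.map_mul, Polynomial.map_mul, hP, hQ, Polynomial.map_C]
    calc C ((B : ℚ)) * p * F + C ((B : ℚ)) * q * G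
        = C ((B : ℚ)) * (p * F + q * G) := by ring
      _ = C (φ B) := by rw [heq, mul_one]; rfl
  -- Step 2: B ≤ r
  have hBr : B ≤ r := by
    apply hBmin
    obtain ⟨u, v, huv⟩ := hrmem
    obtain ⟨k, a, u', hu', hu'd⟩ := pseudoDiv g hgd u
    obtain ⟨j, b, v'', hv'', hv''d⟩ := pseudoDiv f hfd v
    set w : Polynomial ℤ := C g.leadingCoeff ^ k * v + a * f with hw
    set m : Polynomial ℤ := C f.leadingCoeff ^ j * u + b * g with hm
    have h1 : u' * f + w * g = C g.leadingCoeff ^ k * C r := by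
      rw [hw]; linear_combination C g.leadingCoeff ^ k * huv - f * hu'
    have h2 : m * f + v'' * g = C f.leadingCoeff ^ j * C r := by
      rw [hm]; linear_combination C f.leadingCoeff ^ j * huv - g * hv''
    set s₁ : ℚ := (g.leadingCoeff : ℚ) ^ k * (r : ℚ) with hs₁
    set s₂ : ℚ := (f.leadingCoeff : ℚ) ^ j * (r : ℚ) with hs₂
    have hLg : g.leadingCoeff ≠ 0 := leadingCoeff_ne_zero.mpr hg0
    have hLf : f.leadingCoeff ≠ 0 := leadingCoeff_ne_zero.mpr hf0
    have hr0 : (r : ℚ) ≠ 0 := by exact_mod_cast hrpos.ne'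
    have hs₁0 : s₁ ≠ 0 :=
      mul_ne_zero (pow_ne_zero _ (by exact_mod_cast hLg)) hr0
    have hs₂0 : s₂ ≠ 0 :=
      mul_ne_zero (pow_ne_zero _ (by exact_mod_cast hLf)) hr0
    set p : Polynomial ℚ := C s₁⁻¹ * u'.map φ with hp
    set q : Polynomial ℚ := C s₁⁻¹ * w.map φ with hq
    set p₂ : Polynomial ℚ := C s₂⁻¹ * m.map φ with hp₂
    set q₂ : Polynomial ℚ := C s₂⁻¹ * v''.map φ with hq₂
    have hm1 : u'.map φ * F + w.map φ * G = C s₁ := by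
      have h1' := congrArg (Polynomial.map φ) h1
      simp only [Polynomial.map_add, Polynomial.map_mul, Polynomial.map_pow,
        Polynomial.map_C] at h1'
      rw [hs₁, C_mul, C_pow]
      exact h1'
    have hm2 : m.map φ * F + v''.map φ * G = C s₂ := by
      have h2' := congrArg (Polynomial.map φ) h2
      simp only [Polynomial.map_add, Polynomial.map_mul, Polynomial.map_pow,
        Polynomial.map_C] at h2'
      rw [hs₂, C_mul, C_pow]
      exact h2'
    have hpq1 : p * F + q * G = 1 := by
      rw [hp, hq]
      calc C s₁⁻¹ * Polynomial.map φ u' * F + C s₁⁻¹ * Polynomial.map φ w * G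
          = C s₁⁻¹ * (u'.map φ * F + w.map φ * G) := by ring
        _ = C s₁⁻¹ * C s₁ := by rw [hm1]
        _ = 1 := by rw [← C_mul, inv_mul_cancel₀ hs₁0, C_1]
    have hpq2 : p₂ * F + q₂ * G = 1 := by
      rw [hp₂, hq₂]
      calc C s₂⁻¹ * Polynomial.map φ m * F + C s₂⁻¹ * Polynomial.map φ v'' * G
          = C s₂⁻¹ * (m.map φ * F + v''.map φ * G) := by ring
        _ = C s₂⁻¹ * C s₂ := by rw [hm2]
        _ = 1 := by rw [← C_mul, inv_mul_cancel₀ hs₂0, C_1]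
    have hpd : p.degree < G.degree := by
      rw [hp]
      refine lt_of_le_of_lt (degC_mul_le _) ?_
      rw [degree_map_eq_of_injective hφinj u', hdG]
      exact hu'd
    have hq2d : q₂.degree < F.degree := by
      rw [hq₂]
      refine lt_of_le_of_lt (degC_mul_le _) ?_
      rw [degree_map_eq_of_injective hφinj v'', hdF]
      exact hv''d
    have hqd : q.degree < F.degree := cof_deg hFd hGd hpq1 hpd
    have hp2d : p₂.degree < G.degree :=
      cof_deg hGd hFd (by linear_combination hpq2) hq2d
    obtain ⟨hpp, hqq⟩ := bezout_uniq hcop hG0 hpd hp2d hpq1 hpq2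
    have hcopL : IsCoprime (f.leadingCoeff ^ j) (g.leadingCoeff ^ k) :=
      (Int.isCoprime_iff_gcd_eq_one.mpr hd).pow
    obtain ⟨x, y, hxy⟩ := hcopL
    have hU'p : u'.map φ = C s₁ * p := by
      rw [hp, ← mul_assoc, ← C_mul, mul_inv_cancel₀ hs₁0, C_1, one_mul]
    have hWq : w.map φ = C s₁ * q := by
      rw [hq, ← mul_assoc, ← C_mul, mul_inv_cancel₀ hs₁0, C_1, one_mul]
    have hMp : m.map φ = C s₂ * p := by
      rw [hpp, hp₂, ← mul_assoc, ← C_mul, mul_inv_cancel₀ hs₂0, C_1, one_mul]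
    have hVq : v''.map φ = C s₂ * q := by
      rw [hqq, hq₂, ← mul_assoc, ← C_mul, mul_inv_cancel₀ hs₂0, C_1, one_mul]
    have hkey : (x : ℚ) * s₂ + (y : ℚ) * s₁ = (r : ℚ) := by
      have hc : ((x * f.leadingCoeff ^ j + y * g.leadingCoeff ^ k : ℤ) : ℚ) = 1 := by
        exact_mod_cast congrArg (Int.cast : ℤ → ℚ) hxy
      push_cast at hc
      rw [hs₁, hs₂]
      linear_combination (r : ℚ) * hc
    have hkey' : C (φ x) * C s₂ + C (φ y) * C s₁ = C ((r : ℚ)) := by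
      rw [← C_mul, ← C_mul, ← C_add]
      exact congrArg C hkey
    refine ⟨hrpos, p, q, hpd, hqd, hpq1, ⟨C x * m + C y * u', ?_⟩, ⟨C x * v'' + C y * w, ?_⟩⟩
    · rw [Polynomial.map_add, Polynomial.map_mul, Polynomial.map_mul, Polynomial.map_C,
        Polynomial.map_C, hMp, hU'p, ← hkey']
      ring
    · rw [Polynomial.map_add, Polynomial.map_mul, Polynomial.map_mul, Polynomial.map_C,
        Polynomial.map_C, hVq, hWq, ← hkey']
      ring
  omega
end

section
/- Let f and g be coprime integer polynomials of positive degree and d = gcd(L(f), L(g)). Then d·B(f,g) divides |Res(f,g)|. -/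
open Polynomial Matrix

/-- The Sylvester matrix of two integer polynomials. -/
noncomputable def sylvesterMatrix (f g : Polynomial ℤ) :
    Matrix (Fin (g.natDegree + f.natDegree)) (Fin (g.natDegree + f.natDegree)) ℤ :=
  Matrix.of fun i j =>
    if (i : ℕ) < g.natDegree then
      if (i : ℕ) ≤ (j : ℕ) ∧ (j : ℕ) ≤ (i : ℕ) + f.natDegree then
        f.coeff (f.natDegree + i - j)
      else 0
    else
      if (i : ℕ) - g.natDegree ≤ (j : ℕ) ∧ (j : ℕ) ≤ (i : ℕ) - g.natDegree + g.natDegree then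
        g.coeff (g.natDegree + ((i : ℕ) - g.natDegree) - j)
      else 0

/-- The resultant of two integer polynomials, as the determinant of their Sylvester matrix. -/
noncomputable def res (f g : Polynomial ℤ) : ℤ := (sylvesterMatrix f g).det

lemma dvd_det_of_dvd_row {N : ℕ} (d : ℤ) (M : Matrix (Fin N) (Fin N) ℤ) (i : Fin N)
    (h : ∀ j, d ∣ M i j) : d ∣ M.det := by
  have hM : M = M.updateRow i (d • fun j => M i j / d) := by
    rw [show (d • fun j => M i j / d) = M i from funext fun j => Int.mul_ediv_cancel' (h j),
      Matrix.updateRow_eq_self]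
  rw [hM, Matrix.det_updateRow_smul]
  exact Dvd.intro _ rfl

lemma helper (p : Polynomial ℤ) (a N : ℕ) (hN : a + p.natDegree < N) :
    ∑ j ∈ Finset.range N, (if a ≤ j ∧ j ≤ a + p.natDegree then
        C (p.coeff (p.natDegree + a - j)) * X ^ (N - 1 - j) else 0)
      = X ^ (N - 1 - a - p.natDegree) * p := by
  set D := p.natDegree with hD
  have h1 : ∑ j ∈ Finset.range N, (if a ≤ j ∧ j ≤ a + D then
      C (p.coeff (D + a - j)) * X ^ (N - 1 - j) else 0)
      = ∑ j ∈ Finset.Icc a (a + D), C (p.coeff (D + a - j)) * X ^ (N - 1 - j) := by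
    rw [← Finset.sum_filter]
    congr 1
    ext j
    simp only [Finset.mem_filter, Finset.mem_range, Finset.mem_Icc]
    omega
  rw [h1, show Finset.Icc a (a + D) = Finset.Ico a (a + D + 1) by rw [Finset.Ico_add_one_right_eq_Icc],
    Finset.sum_Ico_eq_sum_range,
    show a + D + 1 - a = D + 1 by omega]
  have h2 : ∀ u ∈ Finset.range (D + 1), C (p.coeff (D + a - (a + u))) * X ^ (N - 1 - (a + u))
      = C (p.coeff (D - u)) * X ^ ((D - u) + (N - 1 - a - D)) := fun u hu => by
    simp only [Finset.mem_range] at hu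
    rw [show D + a - (a + u) = D - u by omega,
      show N - 1 - (a + u) = (D - u) + (N - 1 - a - D) by omega]
  rw [Finset.sum_congr rfl h2]
  have h3 := Finset.sum_range_reflect (fun t => C (p.coeff t) * X ^ (t + (N - 1 - a - D))) (D + 1)
  simp only [Nat.add_sub_cancel] at h3
  rw [h3]
  conv_rhs => rw [p.as_sum_range' (D + 1) (by omega)]
  rw [Finset.mul_sum]
  refine Finset.sum_congr rfl fun t ht => ?_
  rw [← C_mul_X_pow_eq_monomial, pow_add]
  ring

lemma sylvester_row (f g : Polynomial ℤ) (i : Fin (g.natDegree + f.natDegree)) :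
    ∑ j : Fin (g.natDegree + f.natDegree),
      C (sylvesterMatrix f g i j) * X ^ (g.natDegree + f.natDegree - 1 - (j : ℕ))
    = if (i : ℕ) < g.natDegree then X ^ (g.natDegree - 1 - (i : ℕ)) * f
      else X ^ (f.natDegree - 1 - ((i : ℕ) - g.natDegree)) * g := by
  have key : ∀ j : Fin (g.natDegree + f.natDegree),
      C (sylvesterMatrix f g i j) * X ^ (g.natDegree + f.natDegree - 1 - (j : ℕ))
      = (fun jj : ℕ => if (i : ℕ) < g.natDegree then
          (if (i : ℕ) ≤ jj ∧ jj ≤ (i : ℕ) + f.natDegree then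
            C (f.coeff (f.natDegree + (i:ℕ) - jj)) * X ^ (g.natDegree + f.natDegree - 1 - jj) else 0)
        else
          (if (i : ℕ) - g.natDegree ≤ jj ∧ jj ≤ (i : ℕ) - g.natDegree + g.natDegree then
            C (g.coeff (g.natDegree + ((i:ℕ) - g.natDegree) - jj)) * X ^ (g.natDegree + f.natDegree - 1 - jj) else 0)) (j : ℕ) := by
    intro j
    simp only [sylvesterMatrix, Matrix.of_apply]
    split_ifs <;> simp
  rw [Finset.sum_congr rfl (fun j _ => key j),
    Fin.sum_univ_eq_sum_range (fun jj : ℕ => if (i : ℕ) < g.natDegree then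
          (if (i : ℕ) ≤ jj ∧ jj ≤ (i : ℕ) + f.natDegree then
            C (f.coeff (f.natDegree + (i:ℕ) - jj)) * X ^ (g.natDegree + f.natDegree - 1 - jj) else 0)
        else
          (if (i : ℕ) - g.natDegree ≤ jj ∧ jj ≤ (i : ℕ) - g.natDegree + g.natDegree then
            C (g.coeff (g.natDegree + ((i:ℕ) - g.natDegree) - jj)) * X ^ (g.natDegree + f.natDegree - 1 - jj) else 0)) (g.natDegree + f.natDegree)]
  by_cases hi : (i : ℕ) < g.natDegree
  · simp only [hi, if_true]
    have h := helper f (i : ℕ) (g.natDegree + f.natDegree) (by omega)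
    rw [show g.natDegree + f.natDegree - 1 - (i:ℕ) - f.natDegree = g.natDegree - 1 - (i:ℕ)
      from by omega] at h
    exact h
  · simp only [hi, if_false]
    have h := helper g ((i : ℕ) - g.natDegree) (g.natDegree + f.natDegree)
      (by have := i.isLt; omega)
    rw [show g.natDegree + f.natDegree - 1 - ((i:ℕ) - g.natDegree) - g.natDegree
        = f.natDegree - 1 - ((i:ℕ) - g.natDegree) from by have := i.isLt; omega] at h
    exact h

theorem statement_13 (f g : Polynomial ℤ)
    (hf : 0 < f.natDegree) (hg : 0 < g.natDegree)
    (hcop : IsCoprime (f.map (Int.castRingHom ℚ)) (g.map (Int.castRingHom ℚ)))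
    (B : ℤ) (hB : IsBezoutDenom f g B)
    (hBmin : ∀ B' : ℤ, IsBezoutDenom f g B' → B ≤ B') :
    (Int.gcd f.leadingCoeff g.leadingCoeff : ℤ) * B ∣ |res f g| := by
  classical
  obtain ⟨hBpos, p, q, hp, hq, hpq, ⟨Pz, hPz⟩, ⟨Qz, hQz⟩⟩ := hB
  set d : ℤ := (Int.gcd f.leadingCoeff g.leadingCoeff : ℤ) with hd
  have hf0 : f ≠ 0 := fun h => by simp [h] at hf
  have hg0 : g ≠ 0 := fun h => by simp [h] at hg
  have hlf : f.leadingCoeff ≠ 0 := leadingCoeff_ne_zero.mpr hf0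
  have hdpos : 0 < d := by
    rw [hd]
    exact_mod_cast Nat.pos_of_ne_zero (fun h => hlf (Int.gcd_eq_zero_iff.mp h).1)
  by_cases hres0 : res f g = 0
  · rw [hres0, abs_zero]; exact dvd_zero _
  have hNpos : 0 < g.natDegree + f.natDegree := by omega
  set b : Fin (g.natDegree + f.natDegree) → ℤ :=
    Pi.single ⟨g.natDegree + f.natDegree - 1, by omega⟩ 1 with hb
  set c : Fin (g.natDegree + f.natDegree) → ℤ :=
    Matrix.cramer ((sylvesterMatrix f g)ᵀ) b with hc
  have hdf : d ∣ f.leadingCoeff := Int.gcd_dvd_left _ _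
  have hdg : d ∣ g.leadingCoeff := Int.gcd_dvd_right _ _
  have hrow : ∀ j : Fin (g.natDegree + f.natDegree),
      d ∣ (sylvesterMatrix f g)ᵀ ⟨0, hNpos⟩ j := by
    intro j
    rw [Matrix.transpose_apply]
    simp only [sylvesterMatrix, Matrix.of_apply]
    split_ifs with h1 h2 h3
    · have hj0 : (j : ℕ) = 0 := by
        rcases h2 with ⟨h2a, -⟩
        simpa using h2a
      rw [show f.natDegree + (j : ℕ) - ((⟨0, hNpos⟩ : Fin (g.natDegree + f.natDegree)) : ℕ)
          = f.natDegree by simp [hj0]]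
      rw [coeff_natDegree]
      exact hdf
    · exact dvd_zero d
    · have hjm : (j : ℕ) = g.natDegree := by
        rcases h3 with ⟨h3a, -⟩
        have : (j : ℕ) - g.natDegree ≤ 0 := by simpa using h3a
        omega
      rw [show g.natDegree + ((j : ℕ) - g.natDegree)
            - ((⟨0, hNpos⟩ : Fin (g.natDegree + f.natDegree)) : ℕ)
          = g.natDegree by simp [hjm]]
      rw [coeff_natDegree]
      exact hdg
    · exact dvd_zero d
  have hdc : ∀ jj, d ∣ c jj := by
    intro jj
    rw [hc, Matrix.cramer_apply]
    apply dvd_det_of_dvd_row d _ ⟨0, hNpos⟩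
    intro k
    rw [Matrix.updateCol_apply]
    split_ifs with h
    · rw [hb, Pi.single_eq_of_ne (Fin.ne_of_val_ne (by simp; omega))]
      exact dvd_zero d
    · exact hrow k
  have hdres : d ∣ res f g := by
    rw [show res f g = (sylvesterMatrix f g)ᵀ.det by rw [Matrix.det_transpose]; rfl]
    exact dvd_det_of_dvd_row d _ ⟨0, hNpos⟩ hrow
  -- the Bezout identity over ℤ with value res f g
  set P : Polynomial ℤ := ∑ i : Fin g.natDegree,
    C (c (Fin.castAdd f.natDegree i)) * X ^ (g.natDegree - 1 - (i : ℕ)) with hPdef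
  set Q : Polynomial ℤ := ∑ k : Fin f.natDegree,
    C (c (Fin.natAdd g.natDegree k)) * X ^ (f.natDegree - 1 - (k : ℕ)) with hQdef
  have hmulVec : (sylvesterMatrix f g)ᵀ.mulVec c = res f g • b := by
    rw [hc, Matrix.mulVec_cramer, Matrix.det_transpose]
    rfl
  have hPQ : P * f + Q * g = C (res f g) := by
    have e1 : P * f + Q * g = ∑ i : Fin (g.natDegree + f.natDegree), C (c i) *
        (if (i : ℕ) < g.natDegree then X ^ (g.natDegree - 1 - (i : ℕ)) * f
         else X ^ (f.natDegree - 1 - ((i : ℕ) - g.natDegree)) * g) := by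
      rw [Fin.sum_univ_add]
      congr 1
      · rw [hPdef, Finset.sum_mul]
        refine Finset.sum_congr rfl fun i _ => ?_
        simp only [Fin.coe_castAdd]
        rw [if_pos i.isLt, mul_assoc]
      · rw [hQdef, Finset.sum_mul]
        refine Finset.sum_congr rfl fun k _ => ?_
        simp only [Fin.coe_natAdd]
        rw [if_neg (by omega), mul_assoc,
          show g.natDegree + (k : ℕ) - g.natDegree = (k : ℕ) by omega]
    rw [e1, Finset.sum_congr rfl (fun i _ => by rw [← sylvester_row f g i])]
    have e3 : ∑ i : Fin (g.natDegree + f.natDegree), C (c i) *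
        ∑ j : Fin (g.natDegree + f.natDegree),
          C (sylvesterMatrix f g i j) * X ^ (g.natDegree + f.natDegree - 1 - (j : ℕ))
        = ∑ j : Fin (g.natDegree + f.natDegree),
          C ((sylvesterMatrix f g)ᵀ.mulVec c j) * X ^ (g.natDegree + f.natDegree - 1 - (j : ℕ)) := by
      simp only [Finset.mul_sum]
      rw [Finset.sum_comm]
      refine Finset.sum_congr rfl fun j _ => ?_
      simp only [Matrix.mulVec, dotProduct, Matrix.transpose_apply]
      rw [map_sum, Finset.sum_mul]
      refine Finset.sum_congr rfl fun i _ => ?_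
      rw [← mul_assoc, ← C_mul, mul_comm (c i)]
    rw [e3, hmulVec]
    have e4 : ∑ j : Fin (g.natDegree + f.natDegree),
        C ((res f g • b) j) * X ^ (g.natDegree + f.natDegree - 1 - (j : ℕ))
        = C ((res f g • b) (⟨g.natDegree + f.natDegree - 1, by omega⟩ : Fin _)) *
            X ^ (g.natDegree + f.natDegree - 1 - (g.natDegree + f.natDegree - 1)) :=
      Fintype.sum_eq_single _ (fun j hj => by
        rw [hb, Pi.smul_apply, Pi.single_eq_of_ne hj, smul_zero, map_zero, zero_mul])
    rw [e4, hb, Pi.smul_apply, Pi.single_eq_same, Nat.sub_self, pow_zero, mul_one,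
      smul_eq_mul, mul_one]
  -- degree bounds over ℤ
  have hdegP : P.degree < (g.natDegree : WithBot ℕ) := by
    apply lt_of_le_of_lt (degree_sum_le _ _)
    rw [Finset.sup_lt_iff (by exact_mod_cast WithBot.bot_lt_coe g.natDegree)]
    intro i _
    apply lt_of_le_of_lt (degree_C_mul_X_pow_le _ _)
    exact_mod_cast (by omega : g.natDegree - 1 - (i : ℕ) < g.natDegree)
  have hdegQ : Q.degree < (f.natDegree : WithBot ℕ) := by
    apply lt_of_le_of_lt (degree_sum_le _ _)
    rw [Finset.sup_lt_iff (by exact_mod_cast WithBot.bot_lt_coe f.natDegree)]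
    intro k _
    apply lt_of_le_of_lt (degree_C_mul_X_pow_le _ _)
    exact_mod_cast (by omega : f.natDegree - 1 - (k : ℕ) < f.natDegree)
  have hinj : Function.Injective (Int.castRingHom ℚ) := Int.cast_injective
  have hdegg' : (g.map (Int.castRingHom ℚ)).degree = (g.natDegree : WithBot ℕ) := by
    rw [degree_map_eq_of_injective hinj, degree_eq_natDegree hg0]
  have hdegf' : (f.map (Int.castRingHom ℚ)).degree = (f.natDegree : WithBot ℕ) := by
    rw [degree_map_eq_of_injective hinj, degree_eq_natDegree hf0]
  -- map to ℚ
  have hPQq : (P.map (Int.castRingHom ℚ)) * (f.map (Int.castRingHom ℚ))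
      + (Q.map (Int.castRingHom ℚ)) * (g.map (Int.castRingHom ℚ)) = C ((res f g : ℚ)) := by
    have := congrArg (Polynomial.map (Int.castRingHom ℚ)) hPQ
    simp only [Polynomial.map_add, Polynomial.map_mul] at this
    exact this.trans (by simp)
  obtain ⟨a, b', hab⟩ := hcop
  have h0 : (P.map (Int.castRingHom ℚ) - C ((res f g : ℚ)) * p) * (f.map (Int.castRingHom ℚ))
      + (Q.map (Int.castRingHom ℚ) - C ((res f g : ℚ)) * q) * (g.map (Int.castRingHom ℚ)) = 0 := by
    linear_combination hPQq - C ((res f g : ℚ)) * hpq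
  have hu : P.map (Int.castRingHom ℚ) - C ((res f g : ℚ)) * p = 0 := by
    apply Polynomial.eq_zero_of_dvd_of_degree_lt (p := g.map (Int.castRingHom ℚ))
    · exact ⟨b' * (P.map (Int.castRingHom ℚ) - C ((res f g : ℚ)) * p)
        - a * (Q.map (Int.castRingHom ℚ) - C ((res f g : ℚ)) * q), by
        linear_combination a * h0 - (P.map (Int.castRingHom ℚ) - C ((res f g : ℚ)) * p) * hab⟩
    · apply lt_of_le_of_lt (degree_sub_le _ _)
      apply max_lt
      · rw [degree_map_eq_of_injective hinj, hdegg']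
        exact hdegP
      · apply lt_of_le_of_lt (degree_mul_le _ _)
        calc degree (C ((res f g : ℚ))) + degree p ≤ 0 + degree p :=
              by gcongr; exact degree_C_le
          _ = degree p := zero_add _
          _ < _ := hp
  have hv : Q.map (Int.castRingHom ℚ) - C ((res f g : ℚ)) * q = 0 := by
    apply Polynomial.eq_zero_of_dvd_of_degree_lt (p := f.map (Int.castRingHom ℚ))
    · exact ⟨a * (Q.map (Int.castRingHom ℚ) - C ((res f g : ℚ)) * q)
        - b' * (P.map (Int.castRingHom ℚ) - C ((res f g : ℚ)) * p), by
        linear_combination b' * h0 - (Q.map (Int.castRingHom ℚ) - C ((res f g : ℚ)) * q) * hab⟩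
    · apply lt_of_le_of_lt (degree_sub_le _ _)
      apply max_lt
      · rw [degree_map_eq_of_injective hinj, hdegf']
        exact hdegQ
      · apply lt_of_le_of_lt (degree_mul_le _ _)
        calc degree (C ((res f g : ℚ))) + degree q ≤ 0 + degree q :=
              by gcongr; exact degree_C_le
          _ = degree q := zero_add _
          _ < _ := hq
  have hmapP : P.map (Int.castRingHom ℚ) = C ((res f g : ℚ)) * p := sub_eq_zero.mp hu
  have hmapQ : Q.map (Int.castRingHom ℚ) = C ((res f g : ℚ)) * q := sub_eq_zero.mp hv
  -- divide by d
  set P₁ : Polynomial ℤ := ∑ i : Fin g.natDegree,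
    C (c (Fin.castAdd f.natDegree i) / d) * X ^ (g.natDegree - 1 - (i : ℕ)) with hP1def
  set Q₁ : Polynomial ℤ := ∑ k : Fin f.natDegree,
    C (c (Fin.natAdd g.natDegree k) / d) * X ^ (f.natDegree - 1 - (k : ℕ)) with hQ1def
  have hP1 : C d * P₁ = P := by
    rw [hP1def, hPdef, Finset.mul_sum]
    exact Finset.sum_congr rfl fun i _ => by
      rw [← mul_assoc, ← C_mul, Int.mul_ediv_cancel' (hdc _)]
  have hQ1 : C d * Q₁ = Q := by
    rw [hQ1def, hQdef, Finset.mul_sum]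
    exact Finset.sum_congr rfl fun k _ => by
      rw [← mul_assoc, ← C_mul, Int.mul_ediv_cancel' (hdc _)]
  set r : ℤ := res f g / d with hrdef
  have hrr : d * r = res f g := Int.mul_ediv_cancel' hdres
  have hr0 : r ≠ 0 := fun h => hres0 (by rw [← hrr, h, mul_zero])
  have hCd : (C ((d : ℚ)) : Polynomial ℚ) ≠ 0 := by
    simpa using (show (d : ℚ) ≠ 0 by exact_mod_cast hdpos.ne')
  have hmapP1 : P₁.map (Int.castRingHom ℚ) = C ((r : ℚ)) * p := by
    apply mul_left_cancel₀ hCd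
    have : (C d * P₁).map (Int.castRingHom ℚ) = C ((d : ℚ)) * P₁.map (Int.castRingHom ℚ) := by
      simp [Polynomial.map_mul]
    rw [← this, hP1, hmapP, ← hrr]
    push_cast
    rw [C_mul, mul_assoc]
  have hmapQ1 : Q₁.map (Int.castRingHom ℚ) = C ((r : ℚ)) * q := by
    apply mul_left_cancel₀ hCd
    have : (C d * Q₁).map (Int.castRingHom ℚ) = C ((d : ℚ)) * Q₁.map (Int.castRingHom ℚ) := by
      simp [Polynomial.map_mul]
    rw [← this, hQ1, hmapQ, ← hrr]
    push_cast
    rw [C_mul, mul_assoc]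
  -- |r| is a Bezout denominator
  have habsP : ∃ P₂ : Polynomial ℤ, P₂.map (Int.castRingHom ℚ) = C (((|r| : ℤ) : ℚ)) * p := by
    rcases abs_choice r with h | h
    · exact ⟨P₁, by rw [h]; exact hmapP1⟩
    · refine ⟨-P₁, ?_⟩
      rw [h, Polynomial.map_neg, hmapP1]
      push_cast [map_neg]
      ring
  have habsQ : ∃ Q₂ : Polynomial ℤ, Q₂.map (Int.castRingHom ℚ) = C (((|r| : ℤ) : ℚ)) * q := by
    rcases abs_choice r with h | h
    · exact ⟨Q₁, by rw [h]; exact hmapQ1⟩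
    · refine ⟨-Q₁, ?_⟩
      rw [h, Polynomial.map_neg, hmapQ1]
      push_cast [map_neg]
      ring
  obtain ⟨P₂, hP₂⟩ := habsP
  obtain ⟨Q₂, hQ₂⟩ := habsQ
  -- gcd(B, |r|) is a Bezout denominator
  have hBgcd : IsBezoutDenom f g (Int.gcd B |r| : ℤ) := by
    refine ⟨?_, p, q, hp, hq, hpq, ?_, ?_⟩
    · exact_mod_cast Nat.pos_of_ne_zero fun h => hBpos.ne' (Int.gcd_eq_zero_iff.mp h).1
    · refine ⟨C (Int.gcdA B |r|) * Pz + C (Int.gcdB B |r|) * P₂, ?_⟩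
      rw [Polynomial.map_add, Polynomial.map_mul, Polynomial.map_mul,
        Polynomial.map_C, Polynomial.map_C, hPz, hP₂]
      rw [← mul_assoc, ← mul_assoc, ← C_mul, ← C_mul, ← add_mul, ← C_add]
      refine congrArg (fun z => C z * _) ?_
      simp only [eq_intCast]
      exact_mod_cast congrArg (fun z : ℤ => (z : ℚ))
        (by linear_combination (Int.gcd_eq_gcd_ab B |r|).symm :
          Int.gcdA B |r| * B + Int.gcdB B |r| * |r| = (Int.gcd B |r| : ℤ))
    · refine ⟨C (Int.gcdA B |r|) * Qz + C (Int.gcdB B |r|) * Q₂, ?_⟩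
      rw [Polynomial.map_add, Polynomial.map_mul, Polynomial.map_mul,
        Polynomial.map_C, Polynomial.map_C, hQz, hQ₂]
      rw [← mul_assoc, ← mul_assoc, ← C_mul, ← C_mul, ← add_mul, ← C_add]
      refine congrArg (fun z => C z * _) ?_
      simp only [eq_intCast]
      exact_mod_cast congrArg (fun z : ℤ => (z : ℚ))
        (by linear_combination (Int.gcd_eq_gcd_ab B |r|).symm :
          Int.gcdA B |r| * B + Int.gcdB B |r| * |r| = (Int.gcd B |r| : ℤ))
  have hle : B ≤ (Int.gcd B |r| : ℤ) := hBmin _ hBgcd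
  have heq : (Int.gcd B |r| : ℤ) = B :=
    le_antisymm (Int.le_of_dvd hBpos (Int.gcd_dvd_left _ _)) hle
  have hBr : B ∣ |r| := heq ▸ Int.gcd_dvd_right _ _
  have habs : |res f g| = d * |r| := by
    rw [← hrr, abs_mul, abs_of_nonneg hdpos.le]
  rw [habs]
  exact mul_dvd_mul_left d hBr
end
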